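/- Let p* ∈ Δ^K, let γ_1,…,γ_K ≥ 0, and define p⁺(i) = (n·p*(i) + γ_i)/(n + ∑_{j=1}^K γ_j). Let α ≥ 0 and let q ∈ Δ^K with q(i) > 0 and log(p⁺(i)/q(i)) ≤ α for all i ∈ [K]. Then ∑_{i=1}^K p*(i)·( log(p⁺(i)/q(i)) )² ≤ (2 + α)·( ∑_{i=1}^K p*(i)·log(p⁺(i)/q(i)) + (∑_{i=1}^K γ_i)/n ). -/

import Mathlib

open scoped ENNReal
open MeasureTheory

/-- The probability simplex on `Fin K`. -/
def simplex (K : ℕ) : Set (Fin K → ℝ) :=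
  {p | (∀ i, 0 ≤ p i) ∧ ∑ i, p i = 1}

/-- Kullback–Leibler divergence between two vectors on `Fin K`, with the
conventions `0 · log 0 = 0` and value `∞` if `p i > 0 = q i` for some `i`. -/
noncomputable def klD {K : ℕ} (p q : Fin K → ℝ) : ℝ≥0∞ :=
  if ∀ i, 0 < p i → 0 < q i then ENNReal.ofReal (∑ i, p i * Real.log (p i / q i)) else ⊤

/-- The law of `n` i.i.d. samples from the distribution `p` on `Fin K`. -/
noncomputable def iidMeasure (n K : ℕ) (p : Fin K → ℝ) : Measure (Fin n → Fin K) :=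
  ∑ x : Fin n → Fin K, (∏ t, ENNReal.ofReal (p (x t))) • Measure.dirac x

/-- `countTo x t i` is the number of indices `s` among the first `t` samples with `x s = i`. -/
def countTo {n K : ℕ} (x : Fin n → Fin K) (t : ℕ) (i : Fin K) : ℕ :=
  (Finset.univ.filter (fun s : Fin n => (s : ℕ) < t ∧ x s = i)).card

/-- The sequential add-`γᵢ` estimator `p_t(i) = (n_{i,t-1} + γᵢ)/(t - 1 + ∑ⱼ γⱼ)`. -/
noncomputable def seqEst {n K : ℕ} (γ : Fin K → ℝ) (x : Fin n → Fin K) (t : ℕ)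
    (i : Fin K) : ℝ :=
  ((countTo x (t - 1) i : ℝ) + γ i) / ((t : ℝ) - 1 + ∑ j, γ j)

/-- The smoothed target `p⁺(i) = (n·p*(i) + γᵢ)/(n + ∑ⱼ γⱼ)`. -/
noncomputable def pPlus {K : ℕ} (n : ℕ) (γ : Fin K → ℝ) (p : Fin K → ℝ) (i : Fin K) : ℝ :=
  ((n : ℝ) * p i + γ i) / ((n : ℝ) + ∑ j, γ j)

/-- corollary of the generalized Yang–Barron inequality for the
smoothed target `p⁺`. -/

private lemma two_sub_le_aux (r : ℝ) (hr : 0 ≤ r) : 2 - r ≤ (2 + r) * Real.exp (-r) := by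
  set f : ℝ → ℝ := fun s => (2 + s) * Real.exp (-s) + s with hf
  have hd : ∀ s : ℝ, HasDerivAt f (1 - (1 + s) * Real.exp (-s)) s := by
    intro s
    have h1 : HasDerivAt (fun s : ℝ => Real.exp (-s)) (-Real.exp (-s)) s := by
      have h := (Real.hasDerivAt_exp (-s)).comp s (hasDerivAt_neg s)
      rw [mul_neg_one] at h
      exact h
    have h2 : HasDerivAt (fun s : ℝ => (2 + s) * Real.exp (-s))
        ((0 + 1) * Real.exp (-s) + (2 + s) * (-Real.exp (-s))) s :=
      ((hasDerivAt_const s (2:ℝ)).add (hasDerivAt_id s)).mul h1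
    have h3 := h2.add (hasDerivAt_id s)
    exact h3.congr_deriv (by ring)
  have hmono : MonotoneOn f (Set.Ici 0) := by
    apply monotoneOn_of_deriv_nonneg (convex_Ici 0)
    · exact fun x _ => ((hd x).continuousAt).continuousWithinAt
    · exact fun x _ => ((hd x).differentiableAt).differentiableWithinAt
    · intro x hx
      rw [interior_Ici] at hx
      rw [(hd x).deriv]
      have h1 : (1 : ℝ) + x ≤ Real.exp x := by linarith [Real.add_one_le_exp x]
      have h2 : Real.exp (-x) = (Real.exp x)⁻¹ := Real.exp_neg x
      have h3 : (0:ℝ) < Real.exp x := Real.exp_pos x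
      rw [h2]
      have : (1 + x) * (Real.exp x)⁻¹ ≤ Real.exp x * (Real.exp x)⁻¹ := by
        apply mul_le_mul_of_nonneg_right h1 (by positivity)
      rw [mul_inv_cancel₀ (ne_of_gt h3)] at this
      linarith
  have := hmono (Set.self_mem_Ici) (Set.mem_Ici.mpr hr) hr
  simp only [hf, Real.exp_zero, neg_zero] at this
  linarith

private lemma yb_pointwise (α r : ℝ) (hα : 0 ≤ α) (hr : r ≤ α) :
    r ^ 2 ≤ (2 + α) * (r + Real.exp (-r) - 1) := by
  have hE : (0:ℝ) < Real.exp (-r) := Real.exp_pos _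
  have hbase : -r + 1 ≤ Real.exp (-r) := Real.add_one_le_exp (-r)
  rcases le_or_gt r 0 with h | h
  · have hq := Real.quadratic_le_exp_of_nonneg (neg_nonneg.mpr h)
    nlinarith
  · have h2 := two_sub_le_aux r h.le
    nlinarith [mul_nonneg (sub_nonneg.mpr hr) (by linarith : (0:ℝ) ≤ r + Real.exp (-r) - 1)]

theorem yang_barron_corollary (K n : ℕ) (hK : 2 ≤ K) (hn : 1 ≤ n)
    (pstar : Fin K → ℝ) (hp : pstar ∈ simplex K)
    (γ : Fin K → ℝ) (hγ : ∀ i, 0 ≤ γ i)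
    (α : ℝ) (hα : 0 ≤ α)
    (q : Fin K → ℝ) (hq : q ∈ simplex K) (hqpos : ∀ i, 0 < q i)
    (hlog : ∀ i, Real.log (pPlus n γ pstar i / q i) ≤ α) :
    ∑ i, pstar i * (Real.log (pPlus n γ pstar i / q i)) ^ 2 ≤
      (2 + α) *
        (∑ i, pstar i * Real.log (pPlus n γ pstar i / q i) + (∑ i, γ i) / n) := by
  obtain ⟨hp0, hp1⟩ := hp
  obtain ⟨hq0, hq1⟩ := hq
  have hΓ0 : (0:ℝ) ≤ ∑ j, γ j := Finset.sum_nonneg fun i _ => hγ i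
  have hnpos : (0:ℝ) < n := by exact_mod_cast Nat.lt_of_lt_of_le Nat.zero_lt_one hn
  have hD : (0:ℝ) < (n:ℝ) + ∑ j, γ j := by linarith
  have key : ∀ i : Fin K, pstar i * (Real.log (pPlus n γ pstar i / q i)) ^ 2 ≤
      (2 + α) * (pstar i * Real.log (pPlus n γ pstar i / q i)
        + ((n:ℝ) + ∑ j, γ j) / n * q i - pstar i) := by
    intro i
    rcases eq_or_lt_of_le (hp0 i) with h0 | h0
    · rw [← h0]
      have : (0:ℝ) ≤ ((n:ℝ) + ∑ j, γ j) / n * q i :=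
        mul_nonneg (div_nonneg hD.le hnpos.le) (hqpos i).le
      nlinarith
    · have hnum : (0:ℝ) < (n:ℝ) * pstar i + γ i := by nlinarith [hγ i]
      have hpplus : 0 < pPlus n γ pstar i := div_pos hnum hD
      set r := Real.log (pPlus n γ pstar i / q i) with hrdef
      have hexp : Real.exp (-r) = q i / pPlus n γ pstar i := by
        rw [hrdef, ← Real.log_inv, Real.exp_log]
        · rw [inv_div]
        · exact inv_pos.mpr (div_pos hpplus (hqpos i))
      have hb := yb_pointwise α r hα (hlog i)
      have hfrac : pstar i * (q i / pPlus n γ pstar i) ≤ ((n:ℝ) + ∑ j, γ j) / n * q i := by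
        rw [pPlus, div_div_eq_mul_div]
        have heq : pstar i * (q i * ((n:ℝ) + ∑ j, γ j) / ((n:ℝ) * pstar i + γ i))
            = pstar i * q i * ((n:ℝ) + ∑ j, γ j) / ((n:ℝ) * pstar i + γ i) := by ring
        rw [heq, div_le_iff₀ hnum, div_mul_eq_mul_div, div_mul_eq_mul_div, le_div_iff₀ hnpos]
        nlinarith [mul_nonneg (mul_nonneg hD.le (hqpos i).le) (hγ i)]
      have hb' : pstar i * r ^ 2 ≤ (2 + α) * (pstar i * r + pstar i * Real.exp (-r) - pstar i) := by
        nlinarith [mul_le_mul_of_nonneg_left hb h0.le]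
      rw [hexp] at hb'
      nlinarith
  calc ∑ i, pstar i * (Real.log (pPlus n γ pstar i / q i)) ^ 2
      ≤ ∑ i, (2 + α) * (pstar i * Real.log (pPlus n γ pstar i / q i)
          + ((n:ℝ) + ∑ j, γ j) / n * q i - pstar i) :=
        Finset.sum_le_sum fun i _ => key i
    _ = (2 + α) * (∑ i, pstar i * Real.log (pPlus n γ pstar i / q i)
          + ((n:ℝ) + ∑ j, γ j) / n * ∑ i, q i - ∑ i, pstar i) := by
        rw [← Finset.mul_sum, Finset.sum_sub_distrib, Finset.sum_add_distrib, ← Finset.mul_sum]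
    _ = (2 + α) * (∑ i, pstar i * Real.log (pPlus n γ pstar i / q i) + (∑ i, γ i) / n) := by
        rw [hq1, hp1, mul_one]
        congr 1
        field_simp
        ring
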